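/- Suppose that V(r,u) > 0 for every valid ranking r ∈ 𝒮 and every u ∈ 𝒰, where 𝒮 is defined by upper-bound constraints only. Then any maxmin-fair distribution F over 𝒮 maximizes the Nash social welfare: for every distribution D over 𝒮, ∏_{u∈𝒰} F[u] ≥ ∏_{u∈𝒰} D[u]. -/

import Mathlib

open Finset

/-- `v` is strictly greater than `w` in the lexicographic order. -/
def lexGT {n : ℕ} (v w : Fin n → ℝ) : Prop :=
  ∃ i, w i < v i ∧ ∀ j < i, v j = w j

/-- `v` is greater than or equal to `w` in the lexicographic order. -/
def lexGE {n : ℕ} (v w : Fin n → ℝ) : Prop := v = w ∨ lexGT v w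

/-- The vector `v` rearranged in increasing order. -/
noncomputable def sortedVec {n : ℕ} (v : Fin n → ℝ) : Fin n → ℝ :=
  v ∘ Tuple.sort v

/-- A probability distribution supported on the valid rankings `Vld`. -/
def IsDistribOn {U : Type*} [Fintype U] [DecidableEq U]
    (Vld : (U ≃ Fin (Fintype.card U)) → Prop) (p : (U ≃ Fin (Fintype.card U)) → ℝ) : Prop :=
  (∀ r, 0 ≤ p r) ∧ (∑ r : U ≃ Fin (Fintype.card U), p r = 1) ∧ (∀ r, p r ≠ 0 → Vld r)

/-- Expected value `D[u] = E_{r∼p}[f(r(u)) - g(u)]` of individual `u` under distribution `p`. -/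
def EV {U : Type*} [Fintype U] [DecidableEq U] (f : Fin (Fintype.card U) → ℝ) (g : U → ℝ)
    (p : (U ≃ Fin (Fintype.card U)) → ℝ) (u : U) : ℝ :=
  ∑ r : U ≃ Fin (Fintype.card U), p r * (f (r u) - g u)

/-- The vector of expected values, sorted in increasing order. -/
noncomputable def scovR {U : Type*} [Fintype U] [DecidableEq U]
    (f : Fin (Fintype.card U) → ℝ) (g : U → ℝ) (p : (U ≃ Fin (Fintype.card U)) → ℝ) :
    Fin (Fintype.card U) → ℝ :=
  sortedVec (fun i => EV f g p ((Fintype.equivFin U).symm i))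

/-- `F` is a maxmin-fair distribution over the valid rankings `Vld`. -/
def MaxminFair {U : Type*} [Fintype U] [DecidableEq U]
    (Vld : (U ≃ Fin (Fintype.card U)) → Prop) (f : Fin (Fintype.card U) → ℝ) (g : U → ℝ)
    (F : (U ≃ Fin (Fintype.card U)) → ℝ) : Prop :=
  IsDistribOn Vld F ∧ ∀ D, IsDistribOn Vld D → lexGE (scovR f g F) (scovR f g D)

/-- A ranking is valid if, for every prefix length `i` and class `k`, the number of
individuals of class `k` in the top `i` positions is at most `ub i k`. -/
def ValidUB {U : Type*} [Fintype U] {t : ℕ} (c : U → Fin t)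
    (ub : Fin (Fintype.card U) → Fin t → ℕ) (r : U ≃ Fin (Fintype.card U)) : Prop :=
  ∀ i : Fin (Fintype.card U), ∀ k : Fin t,
    (Finset.univ.filter (fun u => c u = k ∧ r u ≤ i)).card ≤ ub i k

set_option linter.unusedSectionVars false
set_option maxHeartbeats 1000000

section helpers

variable {U : Type*} [Fintype U] [DecidableEq U]

/-- Sums differing at two points. -/
lemma sum_eq_off_two {M : Type*} [AddCommMonoid M] (A B : U → M) (p q : U) (hpq : p ≠ q)
    (h : ∀ u, u ≠ p → u ≠ q → A u = B u) :
    ∑ u, A u + (B p + B q) = ∑ u, B u + (A p + A q) := by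
  classical
  rw [← Finset.add_sum_erase _ A (mem_univ p),
      ← Finset.add_sum_erase _ A (Finset.mem_erase.2 ⟨hpq.symm, mem_univ q⟩),
      ← Finset.add_sum_erase _ B (mem_univ p),
      ← Finset.add_sum_erase _ B (Finset.mem_erase.2 ⟨hpq.symm, mem_univ q⟩)]
  have : ∑ u ∈ (univ.erase p).erase q, A u = ∑ u ∈ (univ.erase p).erase q, B u := by
    apply Finset.sum_congr rfl
    intro u hu
    simp only [Finset.mem_erase] at hu
    exact h u hu.2.1 hu.1
  rw [this]; abel

lemma exists_mem_not_mem {A B : Finset U} (hcard : B.card ≤ A.card) {z : U}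
    (hzB : z ∈ B) (hzA : z ∉ A) : ∃ w, w ∈ A ∧ w ∉ B := by
  by_contra hc
  push_neg at hc
  have hsub : A ⊆ B.erase z := fun w hw => Finset.mem_erase.2 ⟨fun e => hzA (e ▸ hw), hc w hw⟩
  have := Finset.card_le_card hsub
  rw [Finset.card_erase_of_mem hzB] at this
  have hB : 1 ≤ B.card := Finset.card_pos.2 ⟨z, hzB⟩
  omega

lemma eps_le_zero {S C : ℝ} (h : ∀ ε : ℝ, 0 < ε → S ≤ ε * C) : S ≤ 0 := by
  by_contra hS
  push_neg at hS
  set M : ℝ := max C 1 with hM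
  have hM1 : (1:ℝ) ≤ M := le_max_right _ _
  have hCM : C ≤ M := le_max_left _ _
  have hMpos : 0 < M := lt_of_lt_of_le one_pos hM1
  have hε : 0 < S / (2 * M) := by positivity
  have := h _ hε
  have h2 : S / (2 * M) * C ≤ S / (2 * M) * M := by
    apply mul_le_mul_of_nonneg_left hCM (le_of_lt hε)
  have h3 : S / (2 * M) * M = S / 2 := by field_simp
  nlinarith

end helpers

section sorted

variable {n : ℕ}

lemma lexGT_asymm {v w : Fin n → ℝ} (h1 : lexGT v w) (h2 : lexGT w v) : False := by
  obtain ⟨i, hi, hbi⟩ := h1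
  obtain ⟨i', hi', hbi'⟩ := h2
  rcases lt_trichotomy i i' with h | h | h
  · exact absurd (hbi' i h) (ne_of_lt hi)
  · subst h; exact absurd hi' (not_lt.2 (le_of_lt hi))
  · exact absurd (hbi i' h) (ne_of_lt hi')

lemma lexGT_irrefl (v : Fin n → ℝ) : ¬ lexGT v v := by
  rintro ⟨i, hi, -⟩; exact lt_irrefl _ hi

/-- number of coordinates `≤ t` -/
noncomputable def cntle (v : Fin n → ℝ) (t : ℝ) : ℕ :=
  (univ.filter (fun i => v i ≤ t)).card

lemma cntle_comp_perm (v : Fin n → ℝ) (σ : Equiv.Perm (Fin n)) (t : ℝ) :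
    cntle (v ∘ σ) t = cntle v t := by
  classical
  unfold cntle
  apply Finset.card_bij (fun i _ => σ i)
  · intro i hi; simp only [mem_filter, mem_univ, true_and] at hi ⊢; exact hi
  · intro i _ j _ hij; exact σ.injective hij
  · intro j hj
    refine ⟨σ.symm j, ?_, by simp⟩
    simp only [mem_filter, mem_univ, true_and, Function.comp_apply] at hj ⊢
    simpa using hj

lemma cntle_sortedVec (v : Fin n → ℝ) (t : ℝ) : cntle (sortedVec v) t = cntle v t :=
  cntle_comp_perm v (Tuple.sort v) t

lemma monotone_sortedVec (v : Fin n → ℝ) : Monotone (sortedVec v) :=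
  Tuple.monotone_sort v

/-- For a monotone vector, `g i ≤ t ↔ i < cntle g t`. -/
lemma monotone_le_iff_lt_cntle {g : Fin n → ℝ} (hg : Monotone g) (i : Fin n) (t : ℝ) :
    g i ≤ t ↔ (i : ℕ) < cntle g t := by
  unfold cntle
  constructor
  · intro h
    have hsub : Finset.Iic i ⊆ univ.filter (fun j => g j ≤ t) := by
      intro j hj
      simp only [Finset.mem_Iic] at hj
      simp only [mem_filter, mem_univ, true_and]
      exact le_trans (hg hj) h
    have := Finset.card_le_card hsub
    rw [Fin.card_Iic] at this
    omega
  · intro h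
    by_contra hc
    push_neg at hc
    have hsub : univ.filter (fun j => g j ≤ t) ⊆ Finset.Iio i := by
      intro j hj
      simp only [mem_filter, mem_univ, true_and] at hj
      simp only [Finset.mem_Iio]
      by_contra hj2
      push_neg at hj2
      exact absurd (le_trans (hg hj2) hj) (not_le.2 hc)
    have := Finset.card_le_card hsub
    rw [Fin.card_Iio] at this
    omega

/-- Robin Hood transfer strictly improves sorted vector lexicographically. -/
lemma robin_hood {X Y : Fin n → ℝ} {p q : Fin n} {δ : ℝ} (hpq : p ≠ q)
    (hlt : X p < X q) (hδ : 0 < δ) (hmid : X p + δ ≤ X q - δ)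
    (hYp : Y p = X p + δ) (hYq : Y q = X q - δ)
    (hY : ∀ i, i ≠ p → i ≠ q → Y i = X i) :
    lexGT (sortedVec Y) (sortedVec X) := by
  classical
  have hE1 : ∀ t, t < X p → cntle Y t = cntle X t := by
    intro t ht
    unfold cntle
    congr 1
    apply Finset.filter_congr
    intro i _
    rcases eq_or_ne i p with rfl | hip
    · simp only [hYp, eq_iff_iff]; constructor <;> intro h <;> linarith
    rcases eq_or_ne i q with rfl | hiq
    · simp only [hYq, eq_iff_iff]; constructor <;> intro h <;> linarith
    · rw [hY i hip hiq]
  set m : ℕ := cntle X (X p) with hm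
  have hm1 : 1 ≤ m := by
    rw [hm]; unfold cntle
    exact Finset.card_pos.2 ⟨p, by simp⟩
  have hfilter : univ.filter (fun i => Y i ≤ X p)
      = (univ.filter (fun i => X i ≤ X p)).erase p := by
    ext i
    simp only [mem_filter, mem_univ, true_and, Finset.mem_erase]
    rcases eq_or_ne i p with rfl | hip
    · simp only [hYp]
      constructor
      · intro h; linarith
      · rintro ⟨h, -⟩; exact absurd rfl h
    rcases eq_or_ne i q with rfl | hiq
    · simp only [hYq]
      constructor
      · intro h; linarith
      · rintro ⟨-, h⟩; linarith
    · rw [hY i hip hiq]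
      simp [hip]
  have hE2 : cntle Y (X p) = m - 1 := by
    rw [hm]; unfold cntle
    rw [hfilter, Finset.card_erase_of_mem (by simp)]
  have hEless : ∀ t, t < X p → cntle X t + 1 ≤ m := by
    intro t ht
    have hsub : univ.filter (fun i => X i ≤ t)
        ⊆ (univ.filter (fun i => X i ≤ X p)).erase p := by
      intro j hj
      simp only [mem_filter, mem_univ, true_and, Finset.mem_erase] at hj ⊢
      constructor
      · rintro rfl; linarith
      · linarith
    have h2 := Finset.card_le_card hsub
    rw [Finset.card_erase_of_mem (by simp)] at h2
    have hm1' : 1 ≤ (univ.filter (fun i => X i ≤ X p)).card :=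
      Finset.card_pos.2 ⟨p, by simp⟩
    rw [hm]; unfold cntle
    omega
  have hmn : m ≤ n := by
    rw [hm]; unfold cntle
    calc (univ.filter (fun i => X i ≤ X p)).card ≤ (univ : Finset (Fin n)).card :=
          Finset.card_le_card (Finset.filter_subset _ _)
      _ = n := by simp
  have hm1n : m - 1 < n := by omega
  set i₀ : Fin n := ⟨m - 1, hm1n⟩ with hi₀
  have hi₀v : (i₀ : ℕ) = m - 1 := rfl
  have hcX : cntle (sortedVec X) (X p) = m := by rw [cntle_sortedVec]
  have hcY : cntle (sortedVec Y) (X p) = m - 1 := by rw [cntle_sortedVec, hE2]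
  have hXi₀_le : sortedVec X i₀ ≤ X p := by
    rw [monotone_le_iff_lt_cntle (monotone_sortedVec X) i₀ (X p), hcX, hi₀v]
    omega
  have hXi₀_ge : X p ≤ sortedVec X i₀ := by
    by_contra hc
    push_neg at hc
    have h1 : (i₀ : ℕ) < cntle X (sortedVec X i₀) := by
      rw [← cntle_sortedVec, ← monotone_le_iff_lt_cntle (monotone_sortedVec X) i₀]
    have h2 := hEless _ hc
    rw [hi₀v] at h1
    omega
  have hXi₀ : sortedVec X i₀ = X p := le_antisymm hXi₀_le hXi₀_ge
  have hYi₀ : X p < sortedVec Y i₀ := by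
    by_contra hc
    push_neg at hc
    rw [monotone_le_iff_lt_cntle (monotone_sortedVec Y) i₀ (X p), hcY, hi₀v] at hc
    omega
  refine ⟨i₀, by rw [hXi₀]; exact hYi₀, ?_⟩
  intro j hj
  have hjv : (j : ℕ) < m - 1 := by
    have := hj
    simp only [Fin.lt_def, hi₀v] at this
    exact this
  have hjle : sortedVec X j ≤ X p := by
    rw [← hXi₀]; exact monotone_sortedVec X (le_of_lt hj)
  have hd1 : sortedVec X j ≤ sortedVec Y j := by
    by_contra hc
    push_neg at hc
    have hYlt : sortedVec Y j < X p := lt_of_lt_of_le hc hjle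
    have h1 : (j : ℕ) < cntle Y (sortedVec Y j) := by
      rw [← cntle_sortedVec, ← monotone_le_iff_lt_cntle (monotone_sortedVec Y) j]
    rw [hE1 _ hYlt] at h1
    have h2 : sortedVec X j ≤ sortedVec Y j := by
      rw [monotone_le_iff_lt_cntle (monotone_sortedVec X) j, cntle_sortedVec]
      exact h1
    exact absurd h2 (not_le.2 hc)
  have hd2 : sortedVec Y j ≤ sortedVec X j := by
    rcases lt_or_eq_of_le hjle with hs | hs
    · have h1 : (j : ℕ) < cntle X (sortedVec X j) := by
        rw [← cntle_sortedVec, ← monotone_le_iff_lt_cntle (monotone_sortedVec X) j]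
      rw [← hE1 _ hs] at h1
      rw [monotone_le_iff_lt_cntle (monotone_sortedVec Y) j, cntle_sortedVec]
      exact h1
    · rw [hs]
      rw [monotone_le_iff_lt_cntle (monotone_sortedVec Y) j, hcY]
      omega
  exact le_antisymm hd2 hd1

end sorted

section swapsum
variable {U : Type*} [Fintype U] [DecidableEq U]

variable {U : Type*} [Fintype U] [DecidableEq U]

variable {n : ℕ}

lemma sum_swap_apply {M : Type*} [AddCommMonoid M] (T : U → Fin n → M) (s : U ≃ Fin n)
    (z w : U) (hzw : z ≠ w) :
    ∑ u, T u (((Equiv.swap z w).trans s) u) + (T z (s z) + T w (s w))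
      = ∑ u, T u (s u) + (T z (s w) + T w (s z)) := by
  have := sum_eq_off_two (fun u => T u (s (Equiv.swap z w u))) (fun u => T u (s u)) z w hzw
    (fun u h1 h2 => by rw [Equiv.swap_apply_of_ne_of_ne h1 h2])
  simpa [Equiv.swap_apply_left, Equiv.swap_apply_right] using this

lemma val_swap_ge (μ : U → ℝ) (fr : Fin n → ℝ) (hf : Antitone fr) (s : U ≃ Fin n)
    {z w : U} (hμ : μ w ≤ μ z) (hsw : s w ≤ s z) :
    ∑ u, μ u * fr (s u) ≤ ∑ u, μ u * fr (((Equiv.swap z w).trans s) u) := by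
  rcases eq_or_ne z w with rfl | hzw
  · simp [Equiv.swap_self]
  have heq := sum_swap_apply (fun u j => μ u * fr j) s z w hzw
  have hfle : fr (s z) ≤ fr (s w) := hf hsw
  nlinarith [heq]

/-- the displacement measure -/
def dmeas (r s : U ≃ Fin n) : ℕ := ∑ u, (((s u : ℕ) : ℤ) - ((r u : ℕ) : ℤ)).natAbs

lemma dmeas_swap (r s : U ≃ Fin n) (z w : U) (hzw : z ≠ w) :
    dmeas r ((Equiv.swap z w).trans s)
      + ((((s z : ℕ) : ℤ) - ((r z : ℕ) : ℤ)).natAbs + (((s w : ℕ) : ℤ) - ((r w : ℕ) : ℤ)).natAbs)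
    = dmeas r s
      + ((((s w : ℕ) : ℤ) - ((r z : ℕ) : ℤ)).natAbs + (((s z : ℕ) : ℤ) - ((r w : ℕ) : ℤ)).natAbs) := by
  exact sum_swap_apply (fun u j => (((j : ℕ) : ℤ) - ((r u : ℕ) : ℤ)).natAbs) s z w hzw

lemma dmeas_eq_zero {r s : U ≃ Fin n} (h : dmeas r s = 0) : ∀ u, s u = r u := by
  intro u
  have := Finset.sum_eq_zero_iff.1 h u (mem_univ u)
  have : ((s u : ℕ) : ℤ) = ((r u : ℕ) : ℤ) := by omega
  exact Fin.ext (by exact_mod_cast this)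

end swapsum

section cnt
variable {U : Type*} [Fintype U] [DecidableEq U] {t : ℕ} (c : U → Fin t)
  (ub : Fin (Fintype.card U) → Fin t → ℕ)

local notation "n" => Fintype.card U

/-- class-count in prefix -/
def cnt (r : U ≃ Fin n) (k : Fin t) (i : Fin n) : ℕ :=
  (Finset.univ.filter (fun u => c u = k ∧ r u ≤ i)).card

lemma validUB_iff (r : U ≃ Fin n) : ValidUB c ub r ↔ ∀ i k, cnt c r k i ≤ ub i k := Iff.rfl

lemma cnt_swap (r : U ≃ Fin n) (p q : U) (hpq : p ≠ q) (k : Fin t) (i : Fin n) :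
    cnt c ((Equiv.swap p q).trans r) k i
      + ((if c p = k ∧ r p ≤ i then 1 else 0) + if c q = k ∧ r q ≤ i then 1 else 0)
    = cnt c r k i
      + ((if c p = k ∧ r q ≤ i then 1 else 0) + if c q = k ∧ r p ≤ i then 1 else 0) := by
  classical
  unfold cnt
  rw [Finset.card_filter, Finset.card_filter]
  have := sum_eq_off_two
    (fun u => if c u = k ∧ r ((Equiv.swap p q) u) ≤ i then 1 else 0)
    (fun u => if c u = k ∧ r u ≤ i then 1 else 0) p q hpq
    (fun u hup huq => by rw [Equiv.swap_apply_of_ne_of_ne hup huq])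
  simp only [Equiv.swap_apply_left, Equiv.swap_apply_right, Equiv.trans_apply] at this ⊢
  convert this using 3 with u; congr 1
end cnt

section cnt2
variable {U : Type*} [Fintype U] [DecidableEq U] {t : ℕ} {c : U → Fin t}
  {ub : Fin (Fintype.card U) → Fin t → ℕ}

local notation "n" => Fintype.card U

lemma valid_swap_same_class {r : U ≃ Fin n} (hr : ValidUB c ub r) {p q : U}
    (hc : c p = c q) : ValidUB c ub ((Equiv.swap p q).trans r) := by
  rcases eq_or_ne p q with rfl | hpq
  · simpa [Equiv.swap_self] using hr
  intro i k
  have hsw := cnt_swap c r p q hpq k i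
  have hub : cnt c r k i ≤ ub i k := hr i k
  show cnt c ((Equiv.swap p q).trans r) k i ≤ ub i k
  rw [hc] at hsw
  omega

lemma invalid_swap_extract {r : U ≃ Fin n} (hr : ValidUB c ub r) {p q : U} (hpq : p ≠ q)
    (hlt : r p < r q) (hinv : ¬ ValidUB c ub ((Equiv.swap p q).trans r)) :
    ∃ i : Fin n, r p ≤ i ∧ i < r q ∧ ub i (c q) ≤ cnt c r (c q) i := by
  unfold ValidUB at hinv
  push_neg at hinv
  obtain ⟨i, k, hik⟩ := hinv
  have hik' : ub i k < cnt c ((Equiv.swap p q).trans r) k i := hik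
  have hsw := cnt_swap c r p q hpq k i
  have hub : cnt c r k i ≤ ub i k := hr i k
  by_cases h4 : r q ≤ i
  · exfalso
    have h3 : r p ≤ i := le_of_lt (lt_of_lt_of_le hlt h4)
    have e1 : (if c p = k ∧ r p ≤ i then 1 else 0) = (if c p = k then 1 else 0) := by
      simp [h3]
    have e2 : (if c q = k ∧ r q ≤ i then 1 else 0) = (if c q = k then 1 else 0) := by
      simp [h4]
    have e3 : (if c p = k ∧ r q ≤ i then 1 else 0) = (if c p = k then 1 else 0) := by
      simp [h4]
    have e4 : (if c q = k ∧ r p ≤ i then 1 else 0) = (if c q = k then 1 else 0) := by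
      simp [h3]
    rw [e1, e2, e3, e4] at hsw
    by_cases h1 : c p = k <;> by_cases h2 : c q = k <;> simp [h1, h2] at hsw <;> omega
  · by_cases h3 : r p ≤ i
    · have e1 : (if c p = k ∧ r p ≤ i then 1 else 0) = (if c p = k then 1 else 0) := by
        simp [h3]
      have e2 : (if c q = k ∧ r q ≤ i then 1 else 0) = 0 := by simp [h4]
      have e3 : (if c p = k ∧ r q ≤ i then 1 else 0) = 0 := by simp [h4]
      have e4 : (if c q = k ∧ r p ≤ i then 1 else 0) = (if c q = k then 1 else 0) := by
        simp [h3]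
      rw [e1, e2, e3, e4] at hsw
      by_cases h2 : c q = k
      · subst h2
        refine ⟨i, h3, lt_of_not_ge h4, ?_⟩
        by_cases h1 : c p = c q <;> simp [h1] at hsw <;> omega
      · exfalso
        by_cases h1 : c p = k <;> simp [h1, h2] at hsw <;> omega
    · exfalso
      have e1 : (if c p = k ∧ r p ≤ i then 1 else 0) = 0 := by simp [h3]
      have e2 : (if c q = k ∧ r q ≤ i then 1 else 0) = 0 := by simp [h4]
      have e3 : (if c p = k ∧ r q ≤ i then 1 else 0) = 0 := by simp [h4]
      have e4 : (if c q = k ∧ r p ≤ i then 1 else 0) = 0 := by simp [h3]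
      rw [e1, e2, e3, e4] at hsw
      simp only [add_zero] at hsw
      omega
end cnt2

section step
variable {U : Type*} [Fintype U] [DecidableEq U] {t : ℕ} {c : U → Fin t}
  {ub : Fin (Fintype.card U) → Fin t → ℕ}

local notation "n" => Fintype.card U

lemma step_lemma (fr : Fin n → ℝ) (hfs : StrictAnti fr) (μ : U → ℝ)
    (r : U ≃ Fin n) (hr : ValidUB c ub r)
    (hA : ∀ p q : U, ValidUB c ub ((Equiv.swap p q).trans r) → r q < r p → μ p ≤ μ q)
    (s : U ≃ Fin n) (hs : ValidUB c ub s) (hne : ∃ u, s u ≠ r u) :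
    ∃ s' : U ≃ Fin n, ValidUB c ub s' ∧
      (∑ u, μ u * fr (s u) ≤ ∑ u, μ u * fr (s' u)) ∧ dmeas r s' < dmeas r s := by
  classical
  -- least differing position
  have hDne : (univ.filter (fun i : Fin n => s.symm i ≠ r.symm i)).Nonempty := by
    obtain ⟨u, hu⟩ := hne
    refine ⟨s u, ?_⟩
    simp only [mem_filter, mem_univ, true_and, Equiv.symm_apply_apply]
    intro hc
    apply hu
    conv_rhs => rw [hc]
    rw [r.apply_symm_apply]
  set i₀ : Fin n := (univ.filter (fun i : Fin n => s.symm i ≠ r.symm i)).min' hDne with hi₀def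
  have hi₀mem := (univ.filter (fun i : Fin n => s.symm i ≠ r.symm i)).min'_mem hDne
  rw [mem_filter] at hi₀mem
  have hi₀ne : s.symm i₀ ≠ r.symm i₀ := hi₀mem.2
  have hmin : ∀ j : Fin n, j < i₀ → s.symm j = r.symm j := by
    intro j hj
    by_contra hne2
    have hmem : j ∈ univ.filter (fun i : Fin n => s.symm i ≠ r.symm i) :=
      mem_filter.2 ⟨mem_univ _, hne2⟩
    exact absurd (Finset.min'_le _ _ hmem) (not_le.2 hj)
  set a : U := r.symm i₀ with ha
  set b : U := s.symm i₀ with hb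
  have hra : r a = i₀ := r.apply_symm_apply i₀
  have hsb : s b = i₀ := s.apply_symm_apply i₀
  have hba : b ≠ a := hi₀ne
  have hagree : ∀ u : U, s u < i₀ → r u = s u := by
    intro u h
    have h1 : s.symm (s u) = r.symm (s u) := by
      have := hmin (s u) h
      exact this
    rw [Equiv.symm_apply_apply] at h1
    conv_lhs => rw [h1]
    exact r.apply_symm_apply (s u)
  have hagree' : ∀ u : U, r u < i₀ → s u = r u := by
    intro u h
    have h1 : s.symm (r u) = r.symm (r u) := hmin (r u) h
    rw [Equiv.symm_apply_apply] at h1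
    conv_lhs => rw [← h1]
    exact s.apply_symm_apply (r u)
  have hrb : i₀ < r b := by
    rcases lt_trichotomy (r b) i₀ with h | h | h
    · have h2 := hagree' b h
      rw [hsb] at h2
      rw [← h2] at h
      exact absurd h (lt_irrefl _)
    · rw [← hra] at h
      exact absurd (r.injective h) hba
    · exact h
  have hsa : i₀ < s a := by
    rcases lt_trichotomy (s a) i₀ with h | h | h
    · have h2 := hagree a h
      rw [hra] at h2
      rw [← h2] at h
      exact absurd h (lt_irrefl _)
    · rw [← hsb] at h
      exact absurd (s.injective h) (fun hh => hba hh.symm)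
    · exact h
  by_cases hV : ValidUB c ub ((Equiv.swap a b).trans r)
  · -- swap (a b) valid at r, so μ b ≤ μ a
    have hμba : μ b ≤ μ a := hA b a (by rw [Equiv.swap_comm]; exact hV) (by rw [hra]; exact hrb)
    by_cases hVs : ValidUB c ub ((Equiv.swap a b).trans s)
    · refine ⟨(Equiv.swap a b).trans s, hVs, ?_, ?_⟩
      · exact val_swap_ge μ fr hfs.antitone s (z := a) (w := b) hμba
          (by rw [hsb]; exact le_of_lt hsa)
      · have hd := dmeas_swap r s a b (fun h => hba h.symm)
        have f1 : (i₀ : ℕ) < (s a : ℕ) := hsa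
        have f2 : (i₀ : ℕ) < (r b : ℕ) := hrb
        have f3 : (s b : ℕ) = (i₀ : ℕ) := by rw [hsb]
        have f4 : (r a : ℕ) = (i₀ : ℕ) := by rw [hra]
        omega
    · -- a's ascent in s is blocked: find a' in class of a with s a' ≤ i < r a'
      have hext := invalid_swap_extract hs hba (by rw [hsb]; exact hsa)
        (by rw [Equiv.swap_comm]; exact hVs)
      obtain ⟨i, hi1, hi2, hi3⟩ := hext
      have hi1' : i₀ ≤ i := by rw [← hsb]; exact hi1
      have hcardBA : (univ.filter (fun u => c u = c a ∧ r u ≤ i)).card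
          ≤ (univ.filter (fun u => c u = c a ∧ s u ≤ i)).card :=
        le_trans (hr i (c a)) hi3
      have hzB : a ∈ univ.filter (fun u => c u = c a ∧ r u ≤ i) :=
        Finset.mem_filter.2 ⟨mem_univ _, rfl, by rw [hra]; exact hi1'⟩
      have hzA : a ∉ univ.filter (fun u => c u = c a ∧ s u ≤ i) := fun hmem =>
        absurd (Finset.mem_filter.1 hmem).2.2 (not_le.2 hi2)
      obtain ⟨a', ha'A, ha'B⟩ := exists_mem_not_mem hcardBA hzB hzA
      obtain ⟨-, ha'c, ha's⟩ := Finset.mem_filter.1 ha'A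
      have hra' : i < r a' := by
        by_contra hcon
        exact ha'B (Finset.mem_filter.2 ⟨mem_univ _, ha'c, not_lt.1 hcon⟩)
      have ha'a : a' ≠ a := by
        rintro rfl
        exact absurd ha's (not_le.2 hi2)
      have hsa' : i₀ < s a' := by
        rcases lt_trichotomy (s a') i₀ with h | h | h
        · have h2 := hagree a' h
          rw [h2] at hra'
          exact absurd hra' (not_lt.2 (le_trans (le_of_lt h) hi1'))
        · exfalso
          have hba' : a' = b := by rw [← hsb] at h; exact s.injective h
          apply hVs
          exact valid_swap_same_class hs (by rw [← hba']; exact ha'c.symm)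
        · exact h
      refine ⟨(Equiv.swap a a').trans s, valid_swap_same_class hs ha'c.symm, ?_, ?_⟩
      · refine val_swap_ge μ fr hfs.antitone s (z := a) (w := a') ?_ (le_of_lt (lt_of_le_of_lt ha's hi2))
        exact hA a' a (valid_swap_same_class hr ha'c) (by rw [hra]; exact lt_of_le_of_lt hi1' hra')
      · have hd := dmeas_swap r s a a' ha'a.symm
        have f1 : (i₀ : ℕ) < (s a' : ℕ) := hsa'
        have f2 : (s a' : ℕ) ≤ (i : ℕ) := ha's
        have f3 : (i : ℕ) < (s a : ℕ) := hi2
        have f4 : (i : ℕ) < (r a' : ℕ) := hra'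
        have f5 : (r a : ℕ) = (i₀ : ℕ) := by rw [hra]
        omega
  · -- swap (a b) invalid at r: find b' in class of b with r b' ≤ i < s b'
    have hext := invalid_swap_extract hr (fun h => hba h.symm) (by rw [hra]; exact hrb) hV
    obtain ⟨i, hi1, hi2, hi3⟩ := hext
    have hi1' : i₀ ≤ i := by rw [← hra]; exact hi1
    have hcardBA : (univ.filter (fun u => c u = c b ∧ s u ≤ i)).card
        ≤ (univ.filter (fun u => c u = c b ∧ r u ≤ i)).card :=
      le_trans (hs i (c b)) hi3
    have hzB : b ∈ univ.filter (fun u => c u = c b ∧ s u ≤ i) :=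
      Finset.mem_filter.2 ⟨mem_univ _, rfl, by rw [hsb]; exact hi1'⟩
    have hzA : b ∉ univ.filter (fun u => c u = c b ∧ r u ≤ i) := fun hmem =>
      absurd (Finset.mem_filter.1 hmem).2.2 (not_le.2 hi2)
    obtain ⟨b', hb'A, hb'B⟩ := exists_mem_not_mem hcardBA hzB hzA
    obtain ⟨-, hb'c, hb'r⟩ := Finset.mem_filter.1 hb'A
    have hsb' : i < s b' := by
      by_contra hcon
      exact hb'B (Finset.mem_filter.2 ⟨mem_univ _, hb'c, not_lt.1 hcon⟩)
    have hb'b : b' ≠ b := by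
      intro h
      rw [h, hsb] at hsb'
      exact absurd hi1' (not_le.2 hsb')
    have hrb'ge : i₀ ≤ r b' := by
      by_contra hcon
      push_neg at hcon
      have h2 := hagree' b' hcon
      rw [h2] at hsb'
      exact absurd (le_trans (le_of_lt hcon) hi1') (not_le.2 hsb')
    refine ⟨(Equiv.swap b' b).trans s, valid_swap_same_class hs hb'c, ?_, ?_⟩
    · refine val_swap_ge μ fr hfs.antitone s (z := b') (w := b) ?_
        (by rw [hsb]; exact le_of_lt (lt_of_le_of_lt hi1' hsb'))
      exact hA b b' (valid_swap_same_class hr hb'c.symm) (lt_of_le_of_lt hb'r hi2)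
    · have hd := dmeas_swap r s b' b hb'b
      have f1 : (s b : ℕ) = (i₀ : ℕ) := by rw [hsb]
      have f2 : (i₀ : ℕ) ≤ (r b' : ℕ) := hrb'ge
      have f3 : (r b' : ℕ) ≤ (i : ℕ) := hb'r
      have f4 : (i : ℕ) < (r b : ℕ) := hi2
      have f5 : (i : ℕ) < (s b' : ℕ) := hsb'
      omega

end step


section l2g
variable {U : Type*} [Fintype U] [DecidableEq U] {t : ℕ} {c : U → Fin t}
  {ub : Fin (Fintype.card U) → Fin t → ℕ}

local notation "n" => Fintype.card U

lemma local_to_global (fr : Fin n → ℝ) (hfs : StrictAnti fr) (μ : U → ℝ)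
    (r : U ≃ Fin n) (hr : ValidUB c ub r)
    (hA : ∀ p q : U, ValidUB c ub ((Equiv.swap p q).trans r) → r q < r p → μ p ≤ μ q) :
    ∀ s : U ≃ Fin n, ValidUB c ub s → ∑ u, μ u * fr (s u) ≤ ∑ u, μ u * fr (r u) := by
  have key : ∀ N : ℕ, ∀ s : U ≃ Fin n, ValidUB c ub s → dmeas r s ≤ N →
      ∑ u, μ u * fr (s u) ≤ ∑ u, μ u * fr (r u) := by
    intro N
    induction N with
    | zero =>
      intro s hs hd
      have h0 := dmeas_eq_zero (Nat.le_zero.1 hd)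
      exact le_of_eq (Finset.sum_congr rfl (fun u _ => by rw [h0 u]))
    | succ N ih =>
      intro s hs hd
      by_cases hne : ∃ u, s u ≠ r u
      · obtain ⟨s', hs', hval, hdlt⟩ := step_lemma fr hfs μ r hr hA s hs hne
        exact le_trans hval (ih s' hs' (by omega))
      · push_neg at hne
        exact le_of_eq (Finset.sum_congr rfl (fun u _ => by rw [hne u]))
  exact fun s hs => key (dmeas r s) s hs le_rfl

end l2g

section evlemmas
variable {U : Type*} [Fintype U] [DecidableEq U]

local notation "n" => Fintype.card U

lemma ev_pos {t : ℕ} {c : U → Fin t} {ub : Fin n → Fin t → ℕ}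
    (f : Fin n → ℝ) (g : U → ℝ)
    (hpos : ∀ r : U ≃ Fin n, ValidUB c ub r → ∀ u : U, 0 < f (r u) - g u)
    (D : (U ≃ Fin n) → ℝ) (hD : IsDistribOn (ValidUB c ub) D) (u : U) :
    0 < EV f g D u := by
  obtain ⟨hnn, hsum, hsupp⟩ := hD
  have hex : ∃ ρ ∈ (univ : Finset (U ≃ Fin n)), D ρ ≠ 0 := by
    apply Finset.exists_ne_zero_of_sum_ne_zero
    rw [hsum]; exact one_ne_zero
  obtain ⟨ρ₀, -, hρ₀⟩ := hex
  unfold EV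
  apply Finset.sum_pos'
  · intro ρ _
    rcases eq_or_ne (D ρ) 0 with h | h
    · rw [h, zero_mul]
    · exact le_of_lt (mul_pos (lt_of_le_of_ne (hnn ρ) (Ne.symm h)) (hpos ρ (hsupp ρ h) u))
  · exact ⟨ρ₀, mem_univ _,
      mul_pos (lt_of_le_of_ne (hnn ρ₀) (Ne.symm hρ₀)) (hpos ρ₀ (hsupp ρ₀ hρ₀) u)⟩

lemma ev_perturb (f : Fin n → ℝ) (g : U → ℝ) (F : (U ≃ Fin n) → ℝ)
    (r₀ r₂ : U ≃ Fin n) (η : ℝ) (u : U) :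
    EV f g (fun ρ => F ρ + ((if ρ = r₂ then η else 0) - if ρ = r₀ then η else 0)) u
      = EV f g F u + η * (f (r₂ u) - f (r₀ u)) := by
  unfold EV
  rw [show (∑ ρ : U ≃ Fin n, (F ρ + ((if ρ = r₂ then η else 0) - if ρ = r₀ then η else 0)) *
      (f (ρ u) - g u)) = ∑ ρ : U ≃ Fin n, (F ρ * (f (ρ u) - g u) +
      ((if ρ = r₂ then η * (f (ρ u) - g u) else 0) - if ρ = r₀ then η * (f (ρ u) - g u) else 0))
    from Finset.sum_congr rfl (fun ρ _ => by split_ifs <;> ring)]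
  rw [Finset.sum_add_distrib, Finset.sum_sub_distrib, Finset.sum_ite_eq', Finset.sum_ite_eq']
  simp only [mem_univ, if_true]
  ring

lemma sum_dist_perturb (F : (U ≃ Fin n) → ℝ) (r₀ r₂ : U ≃ Fin n)
    (η : ℝ) (hsum : ∑ ρ : U ≃ Fin n, F ρ = 1) :
    ∑ ρ : U ≃ Fin n, (F ρ + ((if ρ = r₂ then η else 0) - if ρ = r₀ then η else 0)) = 1 := by
  rw [Finset.sum_add_distrib, Finset.sum_sub_distrib, Finset.sum_ite_eq', Finset.sum_ite_eq']
  simp only [mem_univ, if_true]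
  rw [hsum]; ring

end evlemmas


section keya
variable {U : Type*} [Fintype U] [DecidableEq U] {t : ℕ} {c : U → Fin t}
  {ub : Fin (Fintype.card U) → Fin t → ℕ}

local notation "n" => Fintype.card U

/-- leximin optimality forbids profitable swaps on the (plateau of the) support -/
lemma key_A (f : Fin n → ℝ) (g : U → ℝ) (F : (U ≃ Fin n) → ℝ)
    (hF : MaxminFair (ValidUB c ub) f g F)
    (r₀ : U ≃ Fin n) (hr₀ : F r₀ ≠ 0)
    (r' : U ≃ Fin n) (hr' : ValidUB c ub r') (hplat : ∀ u, f (r' u) = f (r₀ u))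
    (p q : U) (hval : ValidUB c ub ((Equiv.swap p q).trans r'))
    (hgain : f (r' p) < f (r' q)) :
    EV f g F q ≤ EV f g F p := by
  classical
  by_contra hcon
  push_neg at hcon
  obtain ⟨x, hx⟩ : ∃ x : U → ℝ, x = EV f g F := ⟨_, rfl⟩
  rw [← hx] at hcon
  obtain ⟨Δ, hΔ⟩ : ∃ Δ : ℝ, Δ = f (r' q) - f (r' p) := ⟨_, rfl⟩
  have hΔpos : 0 < Δ := by rw [hΔ]; exact sub_pos.2 hgain
  have hpq : p ≠ q := fun h => absurd hgain (by rw [h]; exact lt_irrefl _)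
  have hFr₀pos : 0 < F r₀ := lt_of_le_of_ne (hF.1.1 r₀) (Ne.symm hr₀)
  obtain ⟨η, hη⟩ : ∃ η : ℝ, η = min (F r₀) ((x q - x p) / (2 * Δ)) := ⟨_, rfl⟩
  have hηpos : 0 < η := by
    rw [hη]
    exact lt_min hFr₀pos (div_pos (sub_pos.2 hcon) (by positivity))
  set r₂ : U ≃ Fin n := (Equiv.swap p q).trans r' with hr₂
  have hr₂p : f (r₂ p) = f (r' q) := by
    show f (r' (Equiv.swap p q p)) = _
    rw [Equiv.swap_apply_left]
  have hr₂q : f (r₂ q) = f (r' p) := by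
    show f (r' (Equiv.swap p q q)) = _
    rw [Equiv.swap_apply_right]
  have hr₂other : ∀ u, u ≠ p → u ≠ q → f (r₂ u) = f (r' u) := by
    intro u h1 h2
    show f (r' (Equiv.swap p q u)) = _
    rw [Equiv.swap_apply_of_ne_of_ne h1 h2]
  have hr₂ne : r₂ ≠ r₀ := by
    intro h
    have := hr₂p
    rw [h] at this
    rw [← hplat p] at this
    exact absurd this (ne_of_lt hgain)
  set D' : (U ≃ Fin n) → ℝ :=
    fun ρ => F ρ + ((if ρ = r₂ then η else 0) - if ρ = r₀ then η else 0) with hD'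
  have hD'dist : IsDistribOn (ValidUB c ub) D' := by
    refine ⟨?_, ?_, ?_⟩
    · intro ρ
      have h00 := hF.1.1 ρ
      by_cases h2 : ρ = r₂
      · simp only [hD', if_pos h2, if_neg (show ρ ≠ r₀ by rw [h2]; exact hr₂ne)]
        linarith
      by_cases h0 : ρ = r₀
      · have hmin1 : η ≤ F r₀ := by rw [hη]; exact min_le_left _ _
        simp only [hD', if_neg h2, if_pos h0]
        rw [h0] at h00 ⊢
        linarith
      · simp only [hD', if_neg h2, if_neg h0]
        linarith
    · exact sum_dist_perturb F r₀ r₂ η hF.1.2.1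
    · intro ρ hρ
      by_cases h2 : ρ = r₂
      · rw [h2]; exact hval
      by_cases h0 : ρ = r₀
      · rw [h0]; exact hF.1.2.2 r₀ hr₀
      · apply hF.1.2.2 ρ
        simp only [hD', if_neg h2, if_neg h0] at hρ
        simpa using hρ
  have hEV : ∀ u, EV f g D' u = x u + η * (f (r₂ u) - f (r₀ u)) := by
    intro u
    rw [hx]
    exact ev_perturb f g F r₀ r₂ η u
  have hEVp : EV f g D' p = x p + η * Δ := by
    rw [hEV p, hr₂p, ← hplat p, hΔ]
  have hEVq : EV f g D' q = x q - η * Δ := by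
    rw [hEV q, hr₂q, ← hplat q, hΔ]; ring
  have hEVother : ∀ u, u ≠ p → u ≠ q → EV f g D' u = x u := by
    intro u h1 h2
    rw [hEV u, hr₂other u h1 h2, ← hplat u]; ring
  -- apply robin hood on Fin-indexed vectors
  set e := Fintype.equivFin U with he
  have hmid : x p + η * Δ ≤ x q - η * Δ := by
    have h2 : η ≤ (x q - x p) / (2 * Δ) := by rw [hη]; exact min_le_right _ _
    have h3 : η * Δ ≤ (x q - x p) / 2 := by
      calc η * Δ ≤ (x q - x p) / (2 * Δ) * Δ := mul_le_mul_of_nonneg_right h2 (le_of_lt hΔpos)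
        _ = (x q - x p) / 2 := by
          field_simp
    linarith only [h3]
  have hlex : lexGT (scovR f g D') (scovR f g F) := by
    apply robin_hood (p := e p) (q := e q) (δ := η * Δ)
    · exact fun h => hpq (e.injective h)
    · show EV f g F (e.symm (e p)) < EV f g F (e.symm (e q))
      rw [e.symm_apply_apply, e.symm_apply_apply, ← hx]
      exact hcon
    · positivity
    · show EV f g F (e.symm (e p)) + η * Δ ≤ EV f g F (e.symm (e q)) - η * Δ
      rw [e.symm_apply_apply, e.symm_apply_apply, ← hx]
      exact hmid
    · show EV f g D' (e.symm (e p)) = EV f g F (e.symm (e p)) + η * Δ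
      rw [e.symm_apply_apply, ← hx]
      exact hEVp
    · show EV f g D' (e.symm (e q)) = EV f g F (e.symm (e q)) - η * Δ
      rw [e.symm_apply_apply, ← hx]
      exact hEVq
    · intro i h1 h2
      show EV f g D' (e.symm i) = EV f g F (e.symm i)
      rw [← hx]
      refine hEVother _ (fun h => h1 ?_) (fun h => h2 ?_)
      · rw [← h]; simp
      · rw [← h]; simp
  rcases hF.2 D' hD'dist with heq | hgt
  · rw [heq] at hlex
    exact lexGT_irrefl _ hlex
  · exact lexGT_asymm hlex hgt

end keya


section keyc
variable {U : Type*} [Fintype U] [DecidableEq U] {t : ℕ} {c : U → Fin t}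
  {ub : Fin (Fintype.card U) → Fin t → ℕ}

local notation "n" => Fintype.card U

/-- Every valid ranking scores at most any support ranking of a maxmin-fair
distribution, w.r.t. weights `μ = 1 / EV F`. -/
lemma key_C (f : Fin n → ℝ) (hf : Antitone f) (g : U → ℝ) (F : (U ≃ Fin n) → ℝ)
    (hF : MaxminFair (ValidUB c ub) f g F)
    (hxpos : ∀ u, 0 < EV f g F u)
    (r₀ : U ≃ Fin n) (hr₀ : F r₀ ≠ 0)
    (s : U ≃ Fin n) (hs : ValidUB c ub s) :
    ∑ u, (EV f g F u)⁻¹ * f (s u) ≤ ∑ u, (EV f g F u)⁻¹ * f (r₀ u) := by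
  classical
  set μ : U → ℝ := fun u => (EV f g F u)⁻¹ with hμ
  -- the plateau of r₀ and a weight-minimal element r*
  set P : Finset (U ≃ Fin n) :=
    univ.filter (fun ρ => ValidUB c ub ρ ∧ ∀ u, f (ρ u) = f (r₀ u)) with hP
  have hr₀P : r₀ ∈ P := by
    rw [hP, mem_filter]
    exact ⟨mem_univ _, hF.1.2.2 r₀ hr₀, fun u => rfl⟩
  obtain ⟨rs, hrsP, hrsmin⟩ :=
    P.exists_min_image (fun ρ => ∑ u, μ u * ((ρ u : ℕ) : ℝ)) ⟨r₀, hr₀P⟩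
  rw [hP, mem_filter] at hrsP
  obtain ⟨-, hrsvalid, hrsplat⟩ := hrsP
  -- the swap-local-optimality property for μ at r*
  have hA : ∀ p q : U, ValidUB c ub ((Equiv.swap p q).trans rs) → rs q < rs p → μ p ≤ μ q := by
    intro p q hval hlt
    have hle : f (rs p) ≤ f (rs q) := hf (le_of_lt hlt)
    rcases eq_or_lt_of_le hle with heq | hstrict
    · -- tie: swap stays on the plateau, use μ-weight minimality of r*
      have hmem : (Equiv.swap p q).trans rs ∈ P := by
        rw [hP, mem_filter]
        refine ⟨mem_univ _, hval, ?_⟩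
        intro u
        rcases eq_or_ne u p with rfl | h1
        · show f (rs (Equiv.swap u q u)) = _
          rw [Equiv.swap_apply_left, ← heq, hrsplat u]
        rcases eq_or_ne u q with rfl | h2
        · show f (rs (Equiv.swap p u u)) = _
          rw [Equiv.swap_apply_right, heq, hrsplat u]
        · show f (rs (Equiv.swap p q u)) = _
          rw [Equiv.swap_apply_of_ne_of_ne h1 h2, hrsplat u]
      have hw := hrsmin _ hmem
      have hpq : p ≠ q := fun h => absurd hlt (by rw [h]; exact lt_irrefl _)
      have hkey := sum_swap_apply (fun u j => μ u * ((j : ℕ) : ℝ)) rs p q hpq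
      have hq : ((rs q : ℕ) : ℝ) < ((rs p : ℕ) : ℝ) := by
        exact_mod_cast hlt
      nlinarith [hw, hkey, hq]
    · -- strict gain: forbidden by leximin (key_A)
      have hxq := key_A f g F hF r₀ hr₀ rs hrsvalid hrsplat p q hval hstrict
      rw [hμ]
      simp only []
      exact inv_anti₀ (hxpos q) hxq
  -- apply local-to-global with the strictly antitone perturbation f - ε·pos
  have hstep : ∀ ε : ℝ, 0 < ε →
      (∑ u, μ u * f (s u)) - (∑ u, μ u * f (rs u)) ≤
        ε * ((∑ u, μ u * ((s u : ℕ) : ℝ)) - ∑ u, μ u * ((rs u : ℕ) : ℝ)) := by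
    intro ε hε
    have hfs : StrictAnti (fun j : Fin n => f j - ε * ((j : ℕ) : ℝ)) := by
      intro j j' hjj
      have h1 : f j' ≤ f j := hf (le_of_lt hjj)
      have h2 : ((j : ℕ) : ℝ) < ((j' : ℕ) : ℝ) := by exact_mod_cast hjj
      have := mul_lt_mul_of_pos_left h2 hε
      simp only []
      linarith
    have := local_to_global _ hfs μ rs hrsvalid hA s hs
    simp only [mul_sub] at this
    rw [Finset.sum_sub_distrib, Finset.sum_sub_distrib] at this
    have hrw : ∀ σ : U ≃ Fin n, ∑ u, μ u * (ε * ((σ u : ℕ) : ℝ))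
        = ε * ∑ u, μ u * ((σ u : ℕ) : ℝ) := by
      intro σ
      rw [Finset.mul_sum]
      exact Finset.sum_congr rfl (fun u _ => by ring)
    rw [hrw s, hrw rs] at this
    linarith
  have hle : (∑ u, μ u * f (s u)) - (∑ u, μ u * f (rs u)) ≤ 0 := by
    apply eps_le_zero
    intro ε hε
    exact hstep ε hε
  have hplat_sum : ∑ u, μ u * f (rs u) = ∑ u, μ u * f (r₀ u) :=
    Finset.sum_congr rfl (fun u _ => by rw [hrsplat u])
  rw [hμ] at hle hplat_sum
  simp only [] at hle hplat_sum
  linarith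
end keyc


/-- If all values `V(r,u) = f(r(u)) - g(u)` are positive on valid rankings, then with only
upper-bound constraints any maxmin-fair distribution maximizes the Nash social welfare. -/
theorem maxmin_fair_max_nash_welfare {U : Type*} [Fintype U] [DecidableEq U] {t : ℕ}
    (c : U → Fin t) (ub : Fin (Fintype.card U) → Fin t → ℕ)
    (f : Fin (Fintype.card U) → ℝ) (hf : Antitone f) (g : U → ℝ)
    (hS : ∃ r, ValidUB c ub r)
    (hpos : ∀ r : U ≃ Fin (Fintype.card U), ValidUB c ub r → ∀ u : U, 0 < f (r u) - g u)
    (F : (U ≃ Fin (Fintype.card U)) → ℝ) (hF : MaxminFair (ValidUB c ub) f g F) :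
    ∀ D, IsDistribOn (ValidUB c ub) D →
      ∏ u : U, EV f g D u ≤ ∏ u : U, EV f g F u := by
  classical
  intro D hD
  have hx : ∀ u, 0 < EV f g F u := ev_pos f g hpos F hF.1
  have hy : ∀ u, 0 < EV f g D u := ev_pos f g hpos D hD
  set μ : U → ℝ := fun u => (EV f g F u)⁻¹ with hμ
  have hcov : ∀ u, ∑ ρ : U ≃ Fin (Fintype.card U), F ρ * f (ρ u) = EV f g F u + g u := by
    intro u
    have h1 : EV f g F u = (∑ ρ : U ≃ Fin (Fintype.card U), F ρ * f (ρ u))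
        - (∑ ρ : U ≃ Fin (Fintype.card U), F ρ) * g u := by
      unfold EV
      rw [Finset.sum_mul, ← Finset.sum_sub_distrib]
      exact Finset.sum_congr rfl (fun ρ _ => by ring)
    rw [h1, hF.1.2.1]
    ring
  have hclaim1 : ∀ s, ValidUB c ub s →
      ∑ u, μ u * f (s u) ≤ ∑ u, μ u * (EV f g F u + g u) := by
    intro s hs
    have h1 : ∑ u, μ u * f (s u)
        = ∑ ρ : U ≃ Fin (Fintype.card U), F ρ * (∑ u, μ u * f (s u)) := by
      rw [← Finset.sum_mul, hF.1.2.1, one_mul]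
    rw [h1]
    have h2 : ∑ ρ : U ≃ Fin (Fintype.card U), F ρ * (∑ u, μ u * f (s u))
        ≤ ∑ ρ : U ≃ Fin (Fintype.card U), F ρ * (∑ u, μ u * f (ρ u)) := by
      apply Finset.sum_le_sum
      intro ρ _
      rcases eq_or_ne (F ρ) 0 with h | h
      · rw [h, zero_mul, zero_mul]
      · exact mul_le_mul_of_nonneg_left
          (key_C f hf g F hF hx ρ h s hs) (hF.1.1 ρ)
    refine le_trans h2 (le_of_eq ?_)
    calc ∑ ρ : U ≃ Fin (Fintype.card U), F ρ * (∑ u, μ u * f (ρ u))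
        = ∑ ρ : U ≃ Fin (Fintype.card U), ∑ u, F ρ * (μ u * f (ρ u)) := by
          exact Finset.sum_congr rfl (fun ρ _ => Finset.mul_sum _ _ _)
      _ = ∑ u, ∑ ρ : U ≃ Fin (Fintype.card U), F ρ * (μ u * f (ρ u)) := Finset.sum_comm
      _ = ∑ u, μ u * (∑ ρ : U ≃ Fin (Fintype.card U), F ρ * f (ρ u)) := by
          refine Finset.sum_congr rfl (fun u _ => ?_)
          rw [Finset.mul_sum]
          exact Finset.sum_congr rfl (fun ρ _ => by ring)
      _ = ∑ u, μ u * (EV f g F u + g u) := by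
          exact Finset.sum_congr rfl (fun u _ => by rw [hcov u])
  have hsum_mu_x : ∑ u, μ u * EV f g F u = (Fintype.card U : ℝ) := by
    rw [Finset.sum_congr rfl (fun u _ => inv_mul_cancel₀ (ne_of_gt (hx u)))]
    simp
  have hclaim1' : ∀ s, ValidUB c ub s →
      ∑ u, μ u * (f (s u) - g u) ≤ (Fintype.card U : ℝ) := by
    intro s hs
    have h0 := hclaim1 s hs
    have hexp : ∑ u, μ u * (f (s u) - g u)
        = (∑ u, μ u * f (s u)) - ∑ u, μ u * g u := by
      rw [← Finset.sum_sub_distrib]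
      exact Finset.sum_congr rfl (fun u _ => by ring)
    have hexp2 : ∑ u, μ u * (EV f g F u + g u)
        = (∑ u, μ u * EV f g F u) + ∑ u, μ u * g u := by
      rw [← Finset.sum_add_distrib]
      exact Finset.sum_congr rfl (fun u _ => by ring)
    rw [hexp]
    rw [hexp2, hsum_mu_x] at h0
    linarith
  have hclaim2 : ∑ u, μ u * EV f g D u ≤ (Fintype.card U : ℝ) := by
    have hswap : ∑ u, μ u * EV f g D u
        = ∑ ρ : U ≃ Fin (Fintype.card U), D ρ * (∑ u, μ u * (f (ρ u) - g u)) := by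
      calc ∑ u, μ u * EV f g D u
          = ∑ u, ∑ ρ : U ≃ Fin (Fintype.card U), D ρ * (μ u * (f (ρ u) - g u)) := by
            refine Finset.sum_congr rfl (fun u _ => ?_)
            unfold EV
            rw [Finset.mul_sum]
            exact Finset.sum_congr rfl (fun ρ _ => by ring)
        _ = ∑ ρ : U ≃ Fin (Fintype.card U), ∑ u, D ρ * (μ u * (f (ρ u) - g u)) :=
            Finset.sum_comm
        _ = ∑ ρ : U ≃ Fin (Fintype.card U), D ρ * (∑ u, μ u * (f (ρ u) - g u)) := by
            exact Finset.sum_congr rfl (fun ρ _ => (Finset.mul_sum _ _ _).symm)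
    rw [hswap]
    calc ∑ ρ : U ≃ Fin (Fintype.card U), D ρ * (∑ u, μ u * (f (ρ u) - g u))
        ≤ ∑ ρ : U ≃ Fin (Fintype.card U), D ρ * (Fintype.card U : ℝ) := by
          apply Finset.sum_le_sum
          intro ρ _
          rcases eq_or_ne (D ρ) 0 with h | h
          · rw [h, zero_mul, zero_mul]
          · exact mul_le_mul_of_nonneg_left (hclaim1' ρ (hD.2.2 ρ h)) (hD.1 ρ)
      _ = (Fintype.card U : ℝ) := by rw [← Finset.sum_mul, hD.2.1, one_mul]
  have hlog : ∑ u, Real.log (EV f g D u) ≤ ∑ u, Real.log (EV f g F u) := by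
    have hterm : ∀ u ∈ (univ : Finset U),
        Real.log (EV f g D u) - Real.log (EV f g F u) ≤ μ u * EV f g D u - 1 := by
      intro u _
      have hdiv : Real.log (EV f g D u / EV f g F u) ≤ EV f g D u / EV f g F u - 1 :=
        Real.log_le_sub_one_of_pos (div_pos (hy u) (hx u))
      rw [Real.log_div (ne_of_gt (hy u)) (ne_of_gt (hx u))] at hdiv
      have heq : EV f g D u / EV f g F u = μ u * EV f g D u := by
        rw [div_eq_mul_inv]; ring
      rw [heq] at hdiv
      linarith
    have hsum := Finset.sum_le_sum hterm
    rw [Finset.sum_sub_distrib, Finset.sum_sub_distrib] at hsum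
    have hn : ∑ _u : U, (1:ℝ) = (Fintype.card U : ℝ) := by simp
    rw [hn] at hsum
    linarith
  have hprody : 0 < ∏ u, EV f g D u := Finset.prod_pos (fun u _ => hy u)
  have hprodx : 0 < ∏ u, EV f g F u := Finset.prod_pos (fun u _ => hx u)
  rw [← Real.log_le_log_iff hprody hprodx,
    Real.log_prod (fun u _ => ne_of_gt (hy u)),
    Real.log_prod (fun u _ => ne_of_gt (hx u))]
  exact hlog
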